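/- Let ℓ be a positive integer. For every polynomial P on ℝⁿ of degree strictly less than 2ℓ, every t > 0 and every x ∈ ℝⁿ, B_{ℓ,t} P(x) = P(x). -/

import Mathlib

open MeasureTheory Metric Finset
open Polynomial

section Aux


lemma fwdDiff_eval_poly (p : Polynomial ℝ) :
    fwdDiff (1:ℝ) (fun u => p.eval u) = fun u => (p.comp (X + C 1) - p).eval u := by
  funext u
  simp [fwdDiff, eval_comp]

lemma degree_comp_sub_lt (p : Polynomial ℝ) {N : ℕ} (hp : p.degree < (N:ℕ) + 1) :
    (p.comp (X + C 1) - p).degree < N := by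
  rcases eq_or_ne p.natDegree 0 with h0 | h0
  · obtain ⟨a, rfl⟩ := Polynomial.natDegree_eq_zero.mp h0
    simp only [C_comp, sub_self, degree_zero]
    exact WithBot.bot_lt_coe N
  · have hp0 : p ≠ 0 := fun h => h0 (by simp [h])
    have hdc : (p.comp (X + C 1)).natDegree = p.natDegree := by
      rw [natDegree_comp, natDegree_X_add_C, mul_one]
    have hlc : (p.comp (X + C 1)).leadingCoeff = p.leadingCoeff := by
      rw [leadingCoeff_comp (by rw [natDegree_X_add_C]; exact one_ne_zero),
        (monic_X_add_C (1:ℝ)).leadingCoeff, one_pow, mul_one]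
    have hc0 : p.comp (X + C 1) ≠ 0 := by
      intro h
      apply hp0
      rw [← leadingCoeff_eq_zero, ← hlc, h, leadingCoeff_zero]
    have hdeg : (p.comp (X + C 1)).degree = p.degree := by
      rw [degree_eq_natDegree hc0, degree_eq_natDegree hp0, hdc]
    have := Polynomial.degree_sub_lt hdeg hc0 hlc
    rw [hdeg] at this
    calc (p.comp (X + C 1) - p).degree < p.degree := this
      _ ≤ (N:ℕ) := by
          rw [degree_eq_natDegree hp0] at hp ⊢
          exact_mod_cast Nat.lt_succ_iff.mp (by exact_mod_cast hp)

lemma fwdDiff_iter_poly_eq_zero : ∀ (N : ℕ) (p : Polynomial ℝ), p.degree < (N:ℕ) →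
    ∀ y : ℝ, (fwdDiff (1:ℝ))^[N] (fun u => p.eval u) y = 0 := by
  intro N
  induction N with
  | zero =>
    intro p hp y
    have : p = 0 := by
      rw [← Polynomial.degree_eq_bot]
      exact Nat.WithBot.lt_zero_iff.mp (by exact_mod_cast hp)
    simp [this]
  | succ N ih =>
    intro p hp y
    rw [Function.iterate_succ_apply, fwdDiff_eval_poly]
    exact ih _ (degree_comp_sub_lt p (by exact_mod_cast hp)) y

lemma alt_sum_poly (N : ℕ) (p : Polynomial ℝ) (hp : p.degree < (N:ℕ)) (y : ℝ) :
    ∑ k ∈ Finset.range (N+1), (-1:ℝ)^(N-k) * (N.choose k) * p.eval (y + k) = 0 := by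
  have h := fwdDiff_iter_eq_sum_shift (1:ℝ) (fun u => p.eval u) N y
  rw [fwdDiff_iter_poly_eq_zero N p hp y] at h
  rw [eq_comm] at h
  rw [← h]
  apply Finset.sum_congr rfl
  intro k _
  rw [zsmul_eq_mul]
  push_cast
  ring_nf



lemma comb_identity (ℓ k : ℕ) (hℓ : 0 < ℓ) (hk : k < 2*ℓ) (hke : Even k) :
    ∑ j ∈ Icc 1 ℓ, (-1:ℝ)^j * ((2*ℓ).choose (ℓ-j)) * (j:ℝ)^k
      = if k = 0 then -((((2*ℓ).choose ℓ):ℝ))/2 else 0 := by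
  set f : ℕ → ℝ := fun i => (-1:ℝ)^i * ((2*ℓ).choose i) * ((i:ℝ) - ℓ)^k with hf
  have h0 : ∑ i ∈ range (2*ℓ+1), f i = 0 := by
    have hdeg : ((X - C (ℓ:ℝ))^k).degree < ((2*ℓ:ℕ):WithBot ℕ) := by
      rw [degree_pow, degree_X_sub_C]
      simp only [nsmul_eq_mul, mul_one]
      exact_mod_cast hk
    have h := alt_sum_poly (2*ℓ) ((X - C (ℓ:ℝ))^k) hdeg 0
    rw [← h]
    apply Finset.sum_congr rfl
    intro i hi
    have hi' : i ≤ 2*ℓ := Nat.lt_succ_iff.mp (mem_range.mp hi)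
    have hsign : (-1:ℝ)^(2*ℓ-i) = (-1)^i := by
      have h1 : (2*ℓ - i) + i = 2*ℓ := Nat.sub_add_cancel hi'
      have h2 : ((-1:ℝ)^(2*ℓ-i)) * (-1)^i = 1 := by
        rw [← pow_add, h1]
        exact Even.neg_one_pow ⟨ℓ, by ring⟩
      have h3 : ((-1:ℝ)^i) * (-1)^i = 1 := by
        rw [← pow_add]
        exact Even.neg_one_pow ⟨i, by ring⟩
      calc (-1:ℝ)^(2*ℓ-i) = ((-1:ℝ)^(2*ℓ-i) * (-1)^i) * (-1)^i := by
            rw [mul_assoc, h3, mul_one]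
        _ = (-1)^i := by rw [h2, one_mul]
    rw [hsign, hf]
    simp [eval_pow]
  have hsplit : ∑ i ∈ range (2*ℓ+1), f i
      = (∑ i ∈ range ℓ, f i) + ((∑ i ∈ range ℓ, f (ℓ+(i+1))) + f (ℓ+0)) := by
    rw [show 2*ℓ+1 = ℓ + (ℓ+1) by ring, Finset.sum_range_add]
    rw [Finset.sum_range_succ']
  have hpair : ∀ i ∈ range ℓ, f (ℓ-1-i) = f (ℓ+(i+1)) := by
    intro i hi
    have hi' : i + 1 ≤ ℓ := mem_range.mp hi
    set j := i + 1 with hj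
    have hij : ℓ - 1 - i = ℓ - j := by omega
    rw [hij]
    show f (ℓ - j) = f (ℓ + j)
    simp only [hf]
    have e1 : (((ℓ - j:ℕ)):ℝ) - ℓ = -(j:ℝ) := by
      rw [Nat.cast_sub (by omega)]; ring
    have e2 : (((ℓ + j:ℕ)):ℝ) - ℓ = (j:ℝ) := by push_cast; ring
    have e3 : (2*ℓ).choose (ℓ+j) = (2*ℓ).choose (ℓ-j) := by
      rw [← Nat.choose_symm (by omega : ℓ + j ≤ 2*ℓ)]
      congr 1; omega
    have e4 : (-1:ℝ)^(ℓ-j) = (-1)^(ℓ+j) := by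
      have h1 : (ℓ - j) + (ℓ + j) = 2*ℓ := by omega
      have h2 : ((-1:ℝ)^(ℓ-j)) * (-1)^(ℓ+j) = 1 := by
        rw [← pow_add, h1]; exact Even.neg_one_pow ⟨ℓ, by ring⟩
      have h3 : ((-1:ℝ)^(ℓ+j)) * (-1)^(ℓ+j) = 1 := by
        rw [← pow_add]; exact Even.neg_one_pow ⟨ℓ+j, by ring⟩
      calc (-1:ℝ)^(ℓ-j) = ((-1:ℝ)^(ℓ-j) * (-1)^(ℓ+j)) * (-1)^(ℓ+j) := by
            rw [mul_assoc, h3, mul_one]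
        _ = (-1)^(ℓ+j) := by rw [h2, one_mul]
    rw [e1, e2, e3, e4, hke.neg_pow]
  have hrefl : ∑ i ∈ range ℓ, f i = ∑ i ∈ range ℓ, f (ℓ+(i+1)) := by
    rw [← Finset.sum_range_reflect]
    exact Finset.sum_congr rfl hpair
  set S := ∑ j ∈ Icc 1 ℓ, (-1:ℝ)^j * ((2*ℓ).choose (ℓ-j)) * (j:ℝ)^k with hS
  have hT : ∑ i ∈ range ℓ, f (ℓ+(i+1)) = (-1:ℝ)^ℓ * S := by
    rw [hS, ← Finset.Ico_add_one_right_eq_Icc, Finset.sum_Ico_eq_sum_range, Finset.mul_sum]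
    simp only [Nat.succ_sub_one, Nat.add_sub_cancel]
    apply Finset.sum_congr rfl
    intro i hi
    have hij : i + 1 ≤ ℓ := mem_range.mp hi
    show f (ℓ + (i+1)) = _
    simp only [hf]
    have e2 : (((ℓ + (i+1):ℕ)):ℝ) - ℓ = ((1+i:ℕ):ℝ) := by push_cast; ring
    have e3 : (2*ℓ).choose (ℓ+(i+1)) = (2*ℓ).choose (ℓ-(1+i)) := by
      rw [← Nat.choose_symm (by omega : ℓ + (i+1) ≤ 2*ℓ)]
      congr 1; omega
    rw [e2, e3, pow_add]
    ring_nf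
  have hfl : f (ℓ+0) = (-1:ℝ)^ℓ * ((2*ℓ).choose ℓ) * (0:ℝ)^k := by
    simp only [hf]; simp
  have hmain : (-1:ℝ)^ℓ * S + ((-1:ℝ)^ℓ * S + (-1:ℝ)^ℓ * ((2*ℓ).choose ℓ) * (0:ℝ)^k) = 0 := by
    rw [hsplit, hrefl, hT, hfl] at h0
    exact h0
  have hsq : ((-1:ℝ)^ℓ) * ((-1:ℝ)^ℓ) = 1 := by
    rw [← pow_add]; exact Even.neg_one_pow ⟨ℓ, by ring⟩
  rcases eq_or_ne k 0 with rfl | hk0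
  · rw [if_pos rfl]
    rw [pow_zero] at hmain
    linear_combination ((-1:ℝ)^ℓ/2) * hmain - (S + (((2*ℓ).choose ℓ:ℝ))/2) * hsq
  · rw [if_neg hk0]
    rw [zero_pow hk0] at hmain
    linear_combination ((-1:ℝ)^ℓ/2) * hmain - S * hsq


lemma ball_translate (f : EuclideanSpace ℝ (Fin n) → ℝ) (x : EuclideanSpace ℝ (Fin n)) (s : ℝ) :
    ∫ y in ball x s, f y = ∫ y in ball (0 : EuclideanSpace ℝ (Fin n)) s, f (x + y) := by
  rw [← integral_indicator measurableSet_ball, ← integral_indicator measurableSet_ball]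
  rw [← integral_add_left_eq_self (fun y => (ball x s).indicator f y) x]
  congr 1
  funext y
  by_cases h : y ∈ ball (0 : EuclideanSpace ℝ (Fin n)) s
  · have h' : x + y ∈ ball x s := by
      rw [mem_ball, dist_eq_norm] at h ⊢
      simpa using h
    rw [Set.indicator_of_mem h', Set.indicator_of_mem h]
  · have h' : x + y ∉ ball x s := by
      rw [mem_ball, dist_eq_norm] at h ⊢
      simpa using h
    rw [Set.indicator_of_notMem h', Set.indicator_of_notMem h]

lemma ball_scale (f : EuclideanSpace ℝ (Fin n) → ℝ) {s : ℝ} (hs : 0 < s) :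
    ∫ z in ball (0 : EuclideanSpace ℝ (Fin n)) 1, f (s • z)
      = (s ^ n)⁻¹ • ∫ y in ball (0 : EuclideanSpace ℝ (Fin n)) s, f y := by
  rw [Measure.setIntegral_comp_smul_of_pos volume f (ball (0 : EuclideanSpace ℝ (Fin n)) 1) hs,
    smul_unitBall_of_pos hs, finrank_euclideanSpace_fin]

lemma avg_transfer (f : EuclideanSpace ℝ (Fin n) → ℝ) (x : EuclideanSpace ℝ (Fin n)) {s : ℝ}
    (hs : 0 < s) :
    ⨍ y in ball x s, f y = ⨍ z in ball (0 : EuclideanSpace ℝ (Fin n)) 1, f (x + s • z) := by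
  have hBne : volume (ball (0 : EuclideanSpace ℝ (Fin n)) 1) ≠ 0 :=
    (measure_ball_pos volume (0 : EuclideanSpace ℝ (Fin n)) one_pos).ne'
  have hBfin : volume (ball (0 : EuclideanSpace ℝ (Fin n)) 1) ≠ ⊤ := measure_ball_lt_top.ne
  rw [setAverage_eq, setAverage_eq]
  rw [ball_translate f x s]
  have := ball_scale (fun y => f (x + y)) hs
  rw [show (fun z => f (x + s • z)) = fun z => (fun y => f (x + y)) (s • z) from rfl]
  rw [this]
  rw [measureReal_def, measureReal_def, Measure.addHaar_ball_of_pos volume x hs, finrank_euclideanSpace_fin,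
    ENNReal.toReal_mul, ENNReal.toReal_ofReal (by positivity : (0:ℝ) ≤ s ^ n)]
  rw [smul_smul, mul_inv, mul_comm]


lemma avg_neg (g : EuclideanSpace ℝ (Fin n) → ℝ) :
    ∫ z in ball (0 : EuclideanSpace ℝ (Fin n)) 1, g (-z)
      = ∫ z in ball (0 : EuclideanSpace ℝ (Fin n)) 1, g z := by
  rw [← integral_indicator measurableSet_ball, ← integral_indicator measurableSet_ball]
  rw [← integral_neg_eq_self (fun z => (ball (0 : EuclideanSpace ℝ (Fin n)) 1).indicator g z) volume]
  congr 1
  funext z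
  by_cases h : z ∈ ball (0 : EuclideanSpace ℝ (Fin n)) 1
  · have h' : -z ∈ ball (0 : EuclideanSpace ℝ (Fin n)) 1 := by
      rw [mem_ball, dist_zero_right] at h ⊢; simpa using h
    rw [Set.indicator_of_mem h', Set.indicator_of_mem h]
  · have h' : -z ∉ ball (0 : EuclideanSpace ℝ (Fin n)) 1 := by
      rw [mem_ball, dist_zero_right] at h ⊢; simpa using h
    rw [Set.indicator_of_notMem h', Set.indicator_of_notMem h]

noncomputable def Phi (n : ℕ) (x : EuclideanSpace ℝ (Fin n)) :
    MvPolynomial (Fin n) ℝ →ₐ[ℝ] Polynomial (MvPolynomial (Fin n) ℝ) :=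
  MvPolynomial.aeval (fun i => Polynomial.C (MvPolynomial.C (x i))
    + Polynomial.C (MvPolynomial.X i) * Polynomial.X)

lemma Phi_eval (x : EuclideanSpace ℝ (Fin n)) (P : MvPolynomial (Fin n) ℝ) (s : ℝ)
    (z : Fin n → ℝ) :
    MvPolynomial.eval (fun i => x i + s * z i) P
      = Polynomial.eval₂ (MvPolynomial.eval z) s (Phi n x P) := by
  have key : (MvPolynomial.eval (fun i => x i + s * z i) : MvPolynomial (Fin n) ℝ →+* ℝ)
      = (Polynomial.eval₂RingHom (MvPolynomial.eval z) s).comp (Phi n x).toRingHom := by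
    apply MvPolynomial.ringHom_ext
    · intro r
      simp [Phi]
    · intro i
      simp [Phi]
      ring
  exact congrFun (congrArg DFunLike.coe key) P

lemma Phi_natDegree_le (x : EuclideanSpace ℝ (Fin n)) (P : MvPolynomial (Fin n) ℝ) :
    (Phi n x P).natDegree ≤ P.totalDegree := by
  conv_lhs => rw [← MvPolynomial.support_sum_monomial_coeff P]
  rw [map_sum]
  apply Polynomial.natDegree_sum_le_of_forall_le
  intro m hm
  rw [MvPolynomial.monomial_eq, map_mul]
  refine le_trans (Polynomial.natDegree_mul_le) ?_
  have h1 : ((Phi n x) (MvPolynomial.C (MvPolynomial.coeff m P))).natDegree = 0 := by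
    simp [Phi]
  rw [h1, zero_add]
  rw [Finsupp.prod, map_prod]
  refine le_trans (Polynomial.natDegree_prod_le _ _) ?_
  have hterm : ∀ i ∈ m.support, ((Phi n x) (MvPolynomial.X i ^ m i)).natDegree ≤ m i := by
    intro i _
    rw [map_pow]
    refine le_trans (Polynomial.natDegree_pow_le) ?_
    have : ((Phi n x) (MvPolynomial.X i)).natDegree ≤ 1 := by
      simp only [Phi, MvPolynomial.aeval_X]
      refine le_trans (Polynomial.natDegree_add_le _ _) ?_
      simp [Polynomial.natDegree_C]
    calc m i * ((Phi n x) (MvPolynomial.X i)).natDegree ≤ m i * 1 :=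
          Nat.mul_le_mul_left _ this
      _ = m i := mul_one _
  calc ∑ i ∈ m.support, ((Phi n x) (MvPolynomial.X i ^ m i)).natDegree
        ≤ ∑ i ∈ m.support, m i := Finset.sum_le_sum hterm
    _ = m.sum fun _ e => e := rfl
    _ ≤ P.totalDegree := MvPolynomial.le_totalDegree hm

end Aux

/-- The ball average `B_t f(x) = (1/|B(x,t)|) ∫_{B(x,t)} f`. -/
noncomputable def ballAvgR {n : ℕ} (f : EuclideanSpace ℝ (Fin n) → ℝ) (t : ℝ)
    (x : EuclideanSpace ℝ (Fin n)) : ℝ :=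
  ⨍ y in ball x t, f y

/-- The `2ℓ`-th order ball average operator
`B_{ℓ,t} f(x) := -(2/C(2ℓ,ℓ)) ∑_{j=1}^{ℓ} (-1)^j C(2ℓ, ℓ-j) B_{jt} f(x)`. -/
noncomputable def ballAvgLR {n : ℕ} (ℓ : ℕ) (f : EuclideanSpace ℝ (Fin n) → ℝ) (t : ℝ)
    (x : EuclideanSpace ℝ (Fin n)) : ℝ :=
  -(2 / ((2 * ℓ).choose ℓ : ℝ)) *
    ∑ j ∈ Finset.Icc 1 ℓ, (-1 : ℝ) ^ j * ((2 * ℓ).choose (ℓ - j) : ℝ) *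
      ballAvgR f ((j : ℝ) * t) x

/-- Let `ℓ ≥ 1`.  For every polynomial `P` on `ℝⁿ` of total degree strictly less than `2ℓ`,
every `t > 0` and every `x ∈ ℝⁿ`, `B_{ℓ,t} P(x) = P(x)`. -/
theorem stmt11 (n : ℕ) (hn : 1 ≤ n) (ℓ : ℕ) (hℓ : 0 < ℓ)
    (P : MvPolynomial (Fin n) ℝ) (hP : P.totalDegree < 2 * ℓ)
    (t : ℝ) (ht : 0 < t) (x : EuclideanSpace ℝ (Fin n)) :
    ballAvgLR ℓ (fun y => MvPolynomial.eval (fun i => y i) P) t x =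
      MvPolynomial.eval (fun i => x i) P := by
  classical
  set N := (Phi n x P).natDegree with hN
  have hNlt : N < 2 * ℓ := lt_of_le_of_lt (Phi_natDegree_le x P) hP
  set q : ℕ → MvPolynomial (Fin n) ℝ := fun k => (Phi n x P).coeff k with hq
  set c : ℕ → ℝ := fun k =>
    ⨍ z in ball (0 : EuclideanSpace ℝ (Fin n)) 1, MvPolynomial.eval (fun i => z i) (q k) with hc
  set F : ℝ → ℝ := fun s =>
    ⨍ z in ball (0 : EuclideanSpace ℝ (Fin n)) 1, MvPolynomial.eval (fun i => x i + s * z i) P with hF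
  have hBne : volume (ball (0 : EuclideanSpace ℝ (Fin n)) 1) ≠ 0 :=
    (measure_ball_pos volume (0 : EuclideanSpace ℝ (Fin n)) one_pos).ne'
  have hBfin : volume (ball (0 : EuclideanSpace ℝ (Fin n)) 1) ≠ ⊤ := measure_ball_lt_top.ne
  have hint : ∀ (Q : MvPolynomial (Fin n) ℝ),
      IntegrableOn (fun z : EuclideanSpace ℝ (Fin n) => MvPolynomial.eval (fun i => z i) Q) (ball (0 : EuclideanSpace ℝ (Fin n)) 1) volume := by
    intro Q
    have hcont : Continuous fun z : EuclideanSpace ℝ (Fin n) => MvPolynomial.eval (fun i => z i) Q :=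
      (MvPolynomial.continuous_eval (p := Q)).comp (PiLp.continuous_ofLp 2 (fun _ : Fin n => ℝ))
    exact (hcont.continuousOn.integrableOn_compact (isCompact_closedBall (0:EuclideanSpace ℝ (Fin n)) 1)).mono_set
      ball_subset_closedBall
  -- polynomial representation of F
  have hrep : ∀ s : ℝ, F s = ∑ k ∈ range (N+1), c k * s^k := by
    intro s
    have hpt : ∀ z : EuclideanSpace ℝ (Fin n), MvPolynomial.eval (fun i => x i + s * z i) P
        = ∑ k ∈ range (N+1), MvPolynomial.eval (fun i => z i) (q k) * s^k := by
      intro z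
      rw [Phi_eval x P s (fun i => z i), Polynomial.eval₂_eq_sum_range]
    rw [hF]
    simp only [hpt]
    rw [setAverage_eq]
    rw [integral_finset_sum _ (fun k _ => ((hint (q k)).mul_const (s^k)))]
    rw [Finset.smul_sum]
    apply Finset.sum_congr rfl
    intro k _
    rw [integral_mul_const, hc]
    simp only [setAverage_eq]
    rw [smul_eq_mul, smul_eq_mul]
    ring
  -- F is even
  have heven : ∀ s : ℝ, F (-s) = F s := by
    intro s
    have hzz : ∀ z : EuclideanSpace ℝ (Fin n), MvPolynomial.eval (fun i => x i + -s * z i) P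
        = MvPolynomial.eval (fun i => x i + s * (-z) i) P := by
      intro z
      have hfn : (fun i => x i + -s * z i) = (fun i => x i + s * (-z) i) := by
        funext i
        rw [PiLp.neg_apply]
        ring
      rw [hfn]
    rw [hF]
    simp only
    rw [setAverage_eq, setAverage_eq]
    congr 1
    calc ∫ z in ball (0:EuclideanSpace ℝ (Fin n)) 1, MvPolynomial.eval (fun i => x i + -s * z i) P
        = ∫ z in ball (0:EuclideanSpace ℝ (Fin n)) 1,
            (fun z : EuclideanSpace ℝ (Fin n) => MvPolynomial.eval (fun i => x i + s * z i) P) (-z) := by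
          congr 1
          funext z
          exact hzz z
      _ = ∫ z in ball (0:EuclideanSpace ℝ (Fin n)) 1, MvPolynomial.eval (fun i => x i + s * z i) P :=
          avg_neg (fun z => MvPolynomial.eval (fun i => x i + s * z i) P)
  -- odd coefficients vanish
  have hodd : ∀ k ∈ range (N+1), Odd k → c k = 0 := by
    intro k hk hkodd
    set p1 : Polynomial ℝ := ∑ k ∈ range (N+1), Polynomial.monomial k (c k) with hp1
    set p2 : Polynomial ℝ := ∑ k ∈ range (N+1), Polynomial.monomial k ((-1:ℝ)^k * c k) with hp2
    have hev1 : ∀ s : ℝ, p1.eval s = F s := by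
      intro s
      rw [hp1, Polynomial.eval_finset_sum, hrep]
      simp [Polynomial.eval_monomial]
    have hev2 : ∀ s : ℝ, p2.eval s = F (-s) := by
      intro s
      rw [hp2, Polynomial.eval_finset_sum, hrep]
      apply Finset.sum_congr rfl
      intro k _
      rw [Polynomial.eval_monomial, neg_pow]
      ring
    have hpeq : p1 = p2 := by
      apply Polynomial.funext
      intro s
      rw [hev1, hev2, heven]
    have hcoeff : ∀ (d : ℕ → ℝ) (m : ℕ), m ∈ range (N+1) →
        (∑ k ∈ range (N+1), Polynomial.monomial k (d k)).coeff m = d m := by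
      intro d m hm
      rw [Polynomial.finset_sum_coeff]
      simp only [Polynomial.coeff_monomial]
      rw [Finset.sum_ite_eq', if_pos hm]
    have h1 := hcoeff c k hk
    have h2 := hcoeff (fun k => (-1:ℝ)^k * c k) k hk
    rw [← hp1] at h1
    rw [← hp2] at h2
    have h2' : p2.coeff k = (-1:ℝ)^k * c k := h2
    rw [hpeq, h2', hkodd.neg_one_pow] at h1
    linarith
  -- value of F on positive radii
  have hFval : ∀ j : ℕ, j ∈ Icc 1 ℓ →
      ballAvgR (fun y => MvPolynomial.eval (fun i => y i) P) ((j:ℝ) * t) x = F ((j:ℝ)*t) := by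
    intro j hj
    have hj1 : 1 ≤ j := (Finset.mem_Icc.mp hj).1
    have hjt : 0 < (j:ℝ) * t := by
      apply mul_pos _ ht
      exact_mod_cast hj1
    rw [ballAvgR, avg_transfer _ x hjt, hF]
    rfl
  -- combinatorial coefficient
  set A : ℕ → ℝ := fun k => ∑ j ∈ Icc 1 ℓ, (-1:ℝ)^j * ((2*ℓ).choose (ℓ-j)) * (j:ℝ)^k with hA
  have hC0 : (0:ℝ) < ((2*ℓ).choose ℓ : ℝ) := by
    exact_mod_cast Nat.choose_pos (by omega)
  -- main computation
  rw [ballAvgLR]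
  have hstep : ∀ j ∈ Icc 1 ℓ,
      (-1:ℝ)^j * ((2*ℓ).choose (ℓ-j)) * ballAvgR (fun y => MvPolynomial.eval (fun i => y i) P) ((j:ℝ)*t) x
      = ∑ k ∈ range (N+1), (-1:ℝ)^j * ((2*ℓ).choose (ℓ-j)) * (c k * ((j:ℝ))^k * t^k) := by
    intro j hj
    rw [hFval j hj, hrep, Finset.mul_sum]
    apply Finset.sum_congr rfl
    intro k _
    rw [mul_pow]
    ring
  rw [Finset.sum_congr rfl hstep, Finset.sum_comm]
  have hinner : ∀ k ∈ range (N+1),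
      ∑ j ∈ Icc 1 ℓ, (-1:ℝ)^j * ((2*ℓ).choose (ℓ-j)) * (c k * ((j:ℝ))^k * t^k)
        = c k * t^k * A k := by
    intro k _
    show _ = c k * t^k * (∑ j ∈ Icc 1 ℓ, (-1:ℝ)^j * (((2*ℓ).choose (ℓ-j)):ℝ) * (j:ℝ)^k)
    rw [Finset.mul_sum]
    apply Finset.sum_congr rfl
    intro j _
    ring
  rw [Finset.sum_congr rfl hinner]
  have hsum : ∑ k ∈ range (N+1), c k * t^k * A k
      = c 0 * (-(((2*ℓ).choose ℓ : ℝ))/2) := by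
    rw [Finset.sum_eq_single_of_mem 0 (Finset.mem_range.mpr (Nat.succ_pos N))]
    · have e := comb_identity ℓ 0 hℓ (by omega) Even.zero
      rw [if_pos rfl] at e
      rw [show A 0 = -((((2*ℓ).choose ℓ):ℝ))/2 from e]
      simp
    · intro k hk hk0
      rcases Nat.even_or_odd k with hke | hko
      · have e := comb_identity ℓ k hℓ
          (lt_of_le_of_lt (Nat.lt_succ_iff.mp (Finset.mem_range.mp hk)) hNlt) hke
        rw [if_neg hk0] at e
        rw [show A k = 0 from e, mul_zero]
      · rw [hodd k hk hko]
        ring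
  rw [hsum]
  -- c 0 = eval x P
  have hc0 : c 0 = MvPolynomial.eval (fun i => x i) P := by
    have h1 : F 0 = c 0 := by
      rw [hrep 0, Finset.sum_eq_single_of_mem 0 (Finset.mem_range.mpr (Nat.succ_pos N))]
      · simp
      · intro k _ hk0
        rw [zero_pow hk0]
        ring
    have h2 : F 0 = MvPolynomial.eval (fun i => x i) P := by
      rw [hF]
      simp only [zero_mul, add_zero]
      exact setAverage_const hBne hBfin _
    rw [← h1, h2]
  rw [hc0]
  field_simp
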